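/- Let f : ℤ → F_p satisfy f(k+r) = -f(k) - f(k+1) with f(0)=1, f(1)=...=f(r-1)=0, where r = p^t + 1 for some integer t ≥ 1. Then n := r(r-1) + 1 is a period of f, i.e., f(k+n) = f(k) for all k ∈ ℤ. -/

import Mathlib

open Polynomial

theorem periodicity (p : ℕ) [Fact p.Prime] (t : ℕ) (ht : 1 ≤ t)
    (r n : ℕ) (hr : r = p ^ t + 1) (hn : n = r * (r - 1) + 1)
    (f : ℤ → ZMod p)
    (hrec : ∀ k : ℤ, f (k + r) = -f k - f (k + 1))
    (h0 : f 0 = 1)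
    (hinit : ∀ i : ℤ, 1 ≤ i → i ≤ (r : ℤ) - 1 → f i = 0) :
    ∀ k : ℤ, f (k + n) = f k := by
  have hp2 : 2 ≤ p := (Fact.out : p.Prime).two_le
  have hq2 : 2 ≤ p ^ t := le_trans hp2 (Nat.le_self_pow (by omega) p)
  have hr3 : 3 ≤ r := by omega
  have hnpos : 1 ≤ n := by omega
  -- the ring R = F_p[x]/(x^r + x + 1)
  set P : (ZMod p)[X] := X ^ r + X + 1 with hP
  have hPmonic : P.Monic := by
    have hPe : P = X ^ r + (X + 1) := by rw [hP]; ring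
    rw [hPe]
    apply Polynomial.monic_X_pow_add
    have h1 : (X + 1 : (ZMod p)[X]).degree ≤ 1 := by compute_degree
    exact lt_of_le_of_lt h1 (by exact_mod_cast (by omega : 1 < r))
  set R := AdjoinRoot P with hR
  set x : R := AdjoinRoot.root P with hxdef
  have hx : x ^ r + x + 1 = 0 := by
    have h := AdjoinRoot.mk_self (f := P)
    rw [hP] at h
    rwa [map_add, map_add, map_pow, AdjoinRoot.mk_X, map_one] at h
  -- Frobenius computation: x^n = 1
  have hxq : x ^ (p ^ t + 1) = -(x + 1) := by
    have : x ^ r = -x - 1 := by linear_combination hx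
    rw [← hr, this]; ring
  have hfrob : (-(x + 1) : R) ^ (p ^ t) = -(x ^ (p ^ t) + 1) := by
    have hpoly : ((0 - (X + 1) : (ZMod p)[X])) ^ (p ^ t)
        = 0 - (X ^ (p ^ t) + 1) := by
      rw [sub_pow_char_pow, add_pow_char_pow, one_pow,
        zero_pow (pow_ne_zero t (by omega))]
    have h := congrArg (AdjoinRoot.mk P) hpoly
    simpa [map_pow, map_sub, map_add, map_one, AdjoinRoot.mk_X, zero_sub] using h
  have hxn : x ^ n = 1 := by
    have hn' : n = (p ^ t + 1) * (p ^ t) + 1 := by rw [hn, hr]; simp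
    calc x ^ n = (x ^ (p ^ t + 1)) ^ (p ^ t) * x := by rw [hn', pow_succ, pow_mul]
      _ = -(x ^ (p ^ t) + 1) * x := by rw [hxq, hfrob]
      _ = -(x ^ (p ^ t + 1)) - x := by ring
      _ = 1 := by rw [hxq]; ring
  -- x is a unit
  have hn1 : n - 1 + 1 = n := Nat.succ_pred_eq_of_pos hnpos
  set u : Rˣ := ⟨x, x ^ (n - 1),
    by rw [← pow_succ', hn1, hxn], by rw [← pow_succ, hn1, hxn]⟩ with hu
  have hun : u ^ n = 1 := by
    ext
    simp only [Units.val_pow_eq_pow_val, Units.val_one, hu, hxn]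
  -- power basis and linear functional
  set B := AdjoinRoot.powerBasis' hPmonic with hB
  have hdim : B.dim = r := by
    rw [hB, AdjoinRoot.powerBasis'_dim]
    have hPe : P = X ^ r + (X + 1) := by rw [hP]; ring
    have hdeg1 : (X + 1 : (ZMod p)[X]).degree ≤ 1 := by compute_degree
    have hlt : (X + 1 : (ZMod p)[X]).degree < (X ^ r : (ZMod p)[X]).degree := by
      rw [Polynomial.degree_X_pow]
      exact lt_of_le_of_lt hdeg1 (by exact_mod_cast (by omega : 1 < r))
    have : P.degree = r := by
      rw [hPe, Polynomial.degree_add_eq_left_of_degree_lt hlt,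
        Polynomial.degree_X_pow]
    exact Polynomial.natDegree_eq_of_degree_eq_some this
  set L : R →ₗ[ZMod p] ZMod p :=
    B.basis.constr (ZMod p) (fun j : Fin B.dim => f ((j : ℕ) : ℤ)) with hL
  have hkey : ∀ i : ℕ, i < r → L (x ^ i) = f i := by
    intro i hi
    have hi' : i < B.dim := by omega
    have hb : x ^ i = B.basis ⟨i, hi'⟩ := by
      rw [PowerBasis.coe_basis]
      simp [hB, AdjoinRoot.powerBasis'_gen, hxdef]
    rw [hb, Module.Basis.constr_basis]
  set g : ℤ → ZMod p := fun k => L (((u ^ k : Rˣ) : R)) with hg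
  have hginit : ∀ i : ℕ, i < r → g (i : ℤ) = f (i : ℤ) := by
    intro i hi
    have : ((u ^ (i : ℤ) : Rˣ) : R) = x ^ i := by
      rw [zpow_natCast, Units.val_pow_eq_pow_val]
    rw [hg]
    simp only [this]
    exact hkey i hi
  have hgrec : ∀ k : ℤ, g (k + r) = -g k - g (k + 1) := by
    intro k
    have e : ((u ^ (k + (r : ℤ)) : Rˣ) : R)
        = -((u ^ k : Rˣ) : R) - ((u ^ (k + 1) : Rˣ) : R) := by
      have e1 : (u ^ (k + (r : ℤ)) : Rˣ) = u ^ k * u ^ r := by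
        rw [zpow_add, zpow_natCast]
      have e2 : (u ^ (k + (1 : ℤ)) : Rˣ) = u ^ k * u := by
        rw [zpow_add_one]
      rw [e1, e2, Units.val_mul, Units.val_mul, Units.val_pow_eq_pow_val]
      have hxr : x ^ r = -x - 1 := by linear_combination hx
      show ((u ^ k : Rˣ) : R) * x ^ r = -((u ^ k : Rˣ) : R) - ((u ^ k : Rˣ) : R) * x
      rw [hxr]; ring
    rw [hg]
    simp only [e, map_sub, map_neg]
  -- f = g everywhere, by two-sided induction on the window
  have hwin : ∀ m : ℕ, ∀ k : ℤ, -(m : ℤ) ≤ k → k ≤ (r : ℤ) - 1 + m → f k = g k := by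
    intro m
    induction m with
    | zero =>
      intro k h1 h2
      have hk0 : 0 ≤ k := by omega
      obtain ⟨i, rfl⟩ := Int.eq_ofNat_of_zero_le hk0
      exact (hginit i (by omega)).symm
    | succ m ih =>
      intro k h1 h2
      by_cases hc1 : -(m : ℤ) ≤ k
      · by_cases hc2 : k ≤ (r : ℤ) - 1 + m
        · exact ih k hc1 hc2
        · -- k = r + m
          have hk : k = (r : ℤ) + m := by push_cast at h2 ⊢; omega
          have e1 := hrec (k - r)
          have e2 := hgrec (k - r)
          rw [sub_add_cancel] at e1 e2
          rw [e1, e2, ih (k - r) (by omega) (by omega),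
            ih (k - r + 1) (by omega) (by omega)]
      · -- k = -(m+1)
        have hk : k = -((m : ℤ) + 1) := by push_cast at h1; omega
        have e1 := hrec k
        have e2 := hgrec k
        have hf : f k = -f (k + r) - f (k + 1) := by linear_combination e1
        have hgk : g k = -g (k + r) - g (k + 1) := by linear_combination e2
        rw [hf, hgk, ih (k + r) (by omega) (by omega),
          ih (k + 1) (by omega) (by omega)]
  have hfg : ∀ k : ℤ, f k = g k := by
    intro k
    exact hwin k.natAbs k (by omega) (by have := Int.le_natAbs (a := k); omega)
  intro k
  rw [hfg k, hfg (k + n), hg]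
  have : (u ^ (k + (n : ℤ)) : Rˣ) = u ^ k := by
    rw [zpow_add, zpow_natCast, hun, mul_one]
  simp only [this]
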